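/- Let u₁, u₂ ∈ F^×, let m be a positive integer with gcd(m, q − 1) = 1, and let r be a positive integer with m·r ≡ 1 (mod q − 1), so that f(x) = u₁·(x^q − x) + u₂·Tr(x)^m is a bijection of E. Then the compositional inverse of f is g(x) = (1/d)·(u₂·d)^{−r}·Tr(x)^r + ((d−1)/(2·d·u₁))·Tr(x) − (1/(d·u₁))·Σ_{i=1}^{d−1} i·x^{q^{d−1−i}}; that is, g(f(x)) = x for all x ∈ E. -/

import Mathlib

lemma tele_aux {E : Type*} [Field E] (b : ℕ → E) (c A : E) (e : ℕ) :
    ∑ i ∈ Finset.range e, ((1 + i : ℕ) : E) * (A * (b i - b (i + 1)) + c) =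
      A * (∑ i ∈ Finset.range e, b i - (e : E) * b e) +
        ((∑ i ∈ Finset.range e, (1 + i) : ℕ) : E) * c := by
  induction e with
  | zero => simp
  | succ e ih =>
      rw [Finset.sum_range_succ, ih, Finset.sum_range_succ, Finset.sum_range_succ]
      push_cast
      ring

theorem inverse_of_trace_type_pp
    (q d : ℕ) (hd : 1 < d) (hqd : Nat.Coprime q d)
    (F E : Type*) [Field F] [Field E] [Algebra F E] [Fintype F] [Fintype E]
    (hF : Fintype.card F = q) (hE : Fintype.card E = q ^ d)
    (u₁ u₂ : F) (hu₁ : u₁ ≠ 0) (hu₂ : u₂ ≠ 0)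
    (m : ℕ) (hm : 0 < m) (hgcd : Nat.gcd m (q - 1) = 1)
    (r : ℕ) (hr : 0 < r) (hmr : m * r ≡ 1 [MOD q - 1]) :
    ∀ x : E,
      (fun y : E =>
        (d : E)⁻¹ * (algebraMap F E u₂ * (d : E))⁻¹ ^ r *
            (∑ k ∈ Finset.range d, y ^ (q ^ k)) ^ r +
          ((d * (d - 1) / 2 : ℕ) : E) * ((d : E) ^ 2 * algebraMap F E u₁)⁻¹ *
            (∑ k ∈ Finset.range d, y ^ (q ^ k)) -
          ((d : E) * algebraMap F E u₁)⁻¹ *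
            ∑ i ∈ Finset.Icc 1 (d - 1), (i : E) * y ^ (q ^ (d - 1 - i)))
      ((fun x : E =>
        algebraMap F E u₁ * (x ^ q - x) +
          algebraMap F E u₂ * (∑ k ∈ Finset.range d, x ^ (q ^ k)) ^ m) x) = x := by
  intro x
  dsimp only
  -- characteristic facts
  set p := ringChar F with hp_def
  haveI : CharP F p := ringChar.charP F
  obtain ⟨n, hp_prime, hqpn⟩ := FiniteField.card F p
  haveI hpF : Fact p.Prime := ⟨hp_prime⟩
  haveI : CharP E p := charP_of_injective_algebraMap (algebraMap F E).injective p
  have hq_eq : q = p ^ (n : ℕ) := by rw [← hF, hqpn]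
  have hq2 : 1 < q := by rw [← hF]; exact Fintype.one_lt_card
  -- the q-power Frobenius on E
  set φ : E →+* E := iterateFrobenius E p n with hφ_def
  have hφ : ∀ z : E, φ z = z ^ q := by
    intro z; rw [hφ_def, iterateFrobenius_def, ← hq_eq]
  have hq_add : ∀ a b : E, (a + b) ^ q = a ^ q + b ^ q := by
    intro a b; rw [← hφ, ← hφ, ← hφ, map_add]
  have hq_sub : ∀ a b : E, (a - b) ^ q = a ^ q - b ^ q := by
    intro a b; rw [← hφ, ← hφ, ← hφ, map_sub]
  -- nonvanishing
  have hA : algebraMap F E u₁ ≠ 0 := by simpa using hu₁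
  have hB : algebraMap F E u₂ ≠ 0 := by simpa using hu₂
  have hpq : p ∣ q := by
    rw [hq_eq]; exact dvd_pow_self p n.pos.ne'
  have hdE : (d : E) ≠ 0 := by
    rw [Ne, CharP.cast_eq_zero_iff E p d]
    exact (Nat.Prime.coprime_iff_not_dvd hp_prime).mp
      (Nat.Coprime.coprime_dvd_left hpq hqd)
  -- fixed points
  have hfixq : ∀ u : F, (algebraMap F E u) ^ q = algebraMap F E u := by
    intro u
    have : u ^ q = u := by rw [← hF]; exact FiniteField.pow_card u
    rw [← map_pow, this]
  have hxd : ∀ z : E, z ^ q ^ d = z := by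
    intro z; rw [← hE]; exact FiniteField.pow_card z
  have hstep : ∀ z : E, ∀ k : ℕ, (z ^ q ^ k) ^ q = z ^ q ^ (k + 1) := by
    intro z k; rw [← pow_mul, ← pow_succ]
  -- abbreviations
  set A := algebraMap F E u₁ with hA_def
  set B := algebraMap F E u₂ with hB_def
  set T := ∑ k ∈ Finset.range d, x ^ q ^ k with hT_def
  set c := B * T ^ m with hc_def
  set y := A * (x ^ q - x) + c with hy_def
  obtain ⟨e, rfl⟩ : ∃ e, d = e + 1 := ⟨d - 1, by omega⟩
  -- T is fixed by Frobenius
  have hTq : T ^ q = T := by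
    rw [← hφ, hT_def, map_sum]
    have : ∀ k ∈ Finset.range (e + 1), φ (x ^ q ^ k) = x ^ q ^ (k + 1) := by
      intro k _; rw [hφ, hstep]
    rw [Finset.sum_congr rfl this, Finset.sum_range_succ,
      Finset.sum_range_succ' (fun k => x ^ q ^ k) e, hxd x, pow_zero, pow_one]
  have hcq : c ^ q = c := by
    rw [hc_def, mul_pow, hfixq, ← pow_mul, mul_comm m q, pow_mul, hTq]
  -- iterates of y
  have hyj : ∀ j : ℕ, y ^ q ^ j = A * (x ^ q ^ (j + 1) - x ^ q ^ j) + c := by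
    intro j
    induction j with
    | zero => simp [hy_def]
    | succ j ih =>
        have h1 : y ^ q ^ (j + 1) = (y ^ q ^ j) ^ q := by rw [← pow_mul, ← pow_succ]
        rw [h1, ih, hq_add, mul_pow, hq_sub, hfixq, hcq, hstep, hstep]
  -- trace of y
  have hTry : ∑ k ∈ Finset.range (e + 1), y ^ q ^ k = ((e + 1 : ℕ) : E) * c := by
    rw [Finset.sum_congr rfl (fun k _ => hyj k)]
    rw [Finset.sum_add_distrib, ← Finset.mul_sum,
      Finset.sum_range_sub (fun k => x ^ q ^ k), hxd x, pow_zero, pow_one, sub_self,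
      mul_zero, zero_add, Finset.sum_const, Finset.card_range, nsmul_eq_mul]
  -- the weighted sum
  have hS : ∑ i ∈ Finset.Icc 1 (e + 1 - 1), (i : E) * y ^ q ^ (e + 1 - 1 - i) =
      A * (T - ((e + 1 : ℕ) : E) * x) + (((e + 1) * (e + 1 - 1) / 2 : ℕ) : E) * c := by
    simp only [Nat.add_sub_cancel]
    rw [← Finset.Ico_add_one_right_eq_Icc, Finset.sum_Ico_eq_sum_range]
    simp only [Nat.add_sub_cancel]
    have hcongr : ∀ i ∈ Finset.range e, ((1 + i : ℕ) : E) * y ^ q ^ (e - (1 + i)) =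
        ((1 + i : ℕ) : E) *
          (A * ((fun j => x ^ q ^ (e - j)) i - (fun j => x ^ q ^ (e - j)) (i + 1)) + c) := by
      intro i hi
      simp only [Finset.mem_range] at hi
      have h1 : e - (1 + i) + 1 = e - i := by omega
      have h2 : e - (1 + i) = e - (i + 1) := by omega
      rw [hyj, h1, h2]
    rw [Finset.sum_congr rfl hcongr, tele_aux (fun j => x ^ q ^ (e - j)) c A e]
    have hb : ∑ i ∈ Finset.range e, x ^ q ^ (e - i) = T - x := by
      have hrefl := Finset.sum_range_reflect (fun j => x ^ q ^ (j + 1)) e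
      have hc2 : ∀ i ∈ Finset.range e, x ^ q ^ (e - i) = x ^ q ^ (e - 1 - i + 1) := by
        intro i hi; simp only [Finset.mem_range] at hi
        congr 2
        omega
      rw [Finset.sum_congr rfl hc2, hrefl, hT_def,
        Finset.sum_range_succ' (fun k => x ^ q ^ k) e, pow_zero, pow_one]
      ring
    have hgauss : (∑ i ∈ Finset.range e, (1 + i)) = (e + 1) * e / 2 := by
      have h := Finset.sum_range_id (e + 1)
      rw [Finset.sum_range_succ' (fun i => i) e] at h
      simp only [Nat.add_sub_cancel] at h
      rw [← h]
      simp [Nat.add_comm]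
    rw [hb, hgauss]
    simp only [Nat.sub_self, pow_zero, pow_one]
    push_cast
    ring
  -- T ^ (m * r) = T
  have hTmr : T ^ (m * r) = T := by
    rcases eq_or_ne T 0 with h | h
    · rw [h, zero_pow (Nat.mul_pos hm hr).ne']
    · have hT1 : T ^ (q - 1) = 1 := by
        have hq' : q - 1 + 1 = q := by omega
        have h2 : T ^ (q - 1) * T = 1 * T := by
          rw [← pow_succ, hq', hTq, one_mul]
        exact mul_right_cancel₀ h h2
      obtain ⟨k, hk⟩ := (Nat.modEq_iff_dvd' (Nat.mul_pos hm hr)).mp hmr.symm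
      have h1mr : 1 ≤ m * r := Nat.mul_pos hm hr
      have hmr' : m * r = 1 + (q - 1) * k := by rw [← hk]; omega
      rw [hmr', pow_add, pow_mul, hT1, one_pow, pow_one, mul_one]
  -- final computation
  set D := ((e + 1 : ℕ) : E) with hD_def
  set N := (((e + 1) * (e + 1 - 1) / 2 : ℕ) : E) with hN_def
  have h1 : ((B * D)⁻¹) ^ r * (D * c) ^ r = T := by
    rw [← mul_pow]
    have h2 : (B * D)⁻¹ * (D * c) = T ^ m := by
      rw [hc_def, show D * (B * T ^ m) = B * D * T ^ m by ring,
        inv_mul_cancel_left₀ (mul_ne_zero hB hdE)]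
    rw [h2, ← pow_mul, hTmr]
  rw [hTry, hS, mul_assoc D⁻¹ ((B * D)⁻¹ ^ r) ((D * c) ^ r), h1]
  linear_combination (N * c * D⁻¹ * A⁻¹ + x) * mul_inv_cancel₀ hdE +
    (x * D * D⁻¹ - D⁻¹ * T) * mul_inv_cancel₀ hA
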